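/- For k ≥ 4 and 1 ≤ i ≤ ⌊k/2⌋, the k-spectrum of the word a^{k-i} b^k a^i has exactly (i+1)(k-i+1) = k(i+1) − i² + 1 elements; explicitly it consists of all words a^r b^s a^t with r+s+t = k, 0 ≤ t ≤ i, 0 ≤ r ≤ k-i. -/
import Mathlib


def wa : Bool := false
def wb : Bool := true

/-- The set of scattered factors (subsequences) of `w` of length exactly `k`. -/
def ScatFact (k : ℕ) (w : List Bool) : Finset (List Bool) :=
  (w.sublists.filter (fun u => u.length = k)).toFinset

lemma mem_scatfact {k : ℕ} {w u : List Bool} :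
    u ∈ ScatFact k w ↔ u.Sublist w ∧ u.length = k := by
  simp [ScatFact, List.mem_filter]

lemma sublist_aba {m n p : ℕ} {u : List Bool} :
    u.Sublist (List.replicate m false ++ List.replicate n true ++ List.replicate p false) ↔
    ∃ r s t : ℕ, r ≤ m ∧ s ≤ n ∧ t ≤ p ∧
      u = List.replicate r false ++ List.replicate s true ++ List.replicate t false := by
  constructor
  · intro h
    rw [List.sublist_append_iff] at h
    obtain ⟨xy, z, huz, hxy, hz⟩ := h
    rw [List.sublist_append_iff] at hxy
    obtain ⟨x, y, hxy2, hx, hy⟩ := hxy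
    obtain ⟨r, hr, hxr⟩ := List.sublist_replicate_iff.1 hx
    obtain ⟨s, hs, hys⟩ := List.sublist_replicate_iff.1 hy
    obtain ⟨t, ht, hzt⟩ := List.sublist_replicate_iff.1 hz
    exact ⟨r, s, t, hr, hs, ht, by rw [huz, hxy2, hxr, hys, hzt]⟩
  · rintro ⟨r, s, t, hr, hs, ht, rfl⟩
    exact ((List.replicate_sublist_replicate false).2 hr |>.append
      ((List.replicate_sublist_replicate true).2 hs)).append
      ((List.replicate_sublist_replicate false).2 ht)

lemma rep_false_true_inj : ∀ (r r' : ℕ) (l l' : List Bool),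
    List.replicate r false ++ true :: l = List.replicate r' false ++ true :: l' → r = r' := by
  intro r
  induction r with
  | zero =>
    intro r' l l' h
    cases r' with
    | zero => rfl
    | succ m => simp [List.replicate_succ] at h
  | succ n ih =>
    intro r' l l' h
    cases r' with
    | zero => simp [List.replicate_succ] at h
    | succ m =>
      simp only [List.replicate_succ, List.cons_append, List.cons.injEq] at h
      exact congrArg Nat.succ (ih m l l' h.2)

lemma count_true_rep (r s t : ℕ) :
    List.count true (List.replicate r false ++ List.replicate s true ++ List.replicate t false)
      = s := by
  simp [List.count_append, List.count_replicate]

lemma rep_inj {r s t r' s' t' : ℕ}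
    (h : List.replicate r false ++ List.replicate s true ++ List.replicate t false =
         List.replicate r' false ++ List.replicate s' true ++ List.replicate t' false)
    (hs : 0 < s) : r = r' ∧ s = s' ∧ t = t' := by
  have hss : s = s' := by
    have := congrArg (List.count true) h
    rwa [count_true_rep, count_true_rep] at this
  subst hss
  obtain ⟨s, rfl⟩ := Nat.exists_eq_add_of_lt hs
  have hrr : r = r' := by
    apply rep_false_true_inj r r'
      (List.replicate s true ++ List.replicate t false)
      (List.replicate s true ++ List.replicate t' false)
    simpa [List.replicate_succ, Nat.add_comm] using h
  subst hrr
  refine ⟨rfl, rfl, ?_⟩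
  have := congrArg List.length h
  simp at this
  omega

theorem scatfact_aki_bk_ai (k i : ℕ) (hk : 4 ≤ k) (hi1 : 1 ≤ i) (hi2 : i ≤ k / 2) :
    (∀ u : List Bool,
      u ∈ ScatFact k (List.replicate (k - i) wa ++ List.replicate k wb ++ List.replicate i wa) ↔
        (∃ r s t : ℕ, r + s + t = k ∧ t ≤ i ∧ r ≤ k - i ∧
          u = List.replicate r wa ++ List.replicate s wb ++ List.replicate t wa)) ∧
    (ScatFact k (List.replicate (k - i) wa ++ List.replicate k wb ++ List.replicate i wa)).card
      = (i + 1) * (k - i + 1) := by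
  have hik : i ≤ k := le_trans hi2 (Nat.div_le_self k 2)
  have hmem : ∀ u : List Bool,
      u ∈ ScatFact k (List.replicate (k - i) wa ++ List.replicate k wb ++ List.replicate i wa) ↔
        (∃ r s t : ℕ, r + s + t = k ∧ t ≤ i ∧ r ≤ k - i ∧
          u = List.replicate r wa ++ List.replicate s wb ++ List.replicate t wa) := by
    intro u
    rw [mem_scatfact]
    show u.Sublist (List.replicate (k - i) false ++ List.replicate k true ++
        List.replicate i false) ∧ u.length = k ↔ _
    rw [sublist_aba]
    constructor
    · rintro ⟨⟨r, s, t, hr, hs, ht, rfl⟩, hlen⟩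
      refine ⟨r, s, t, ?_, ht, hr, rfl⟩
      simp at hlen; omega
    · rintro ⟨r, s, t, hsum, ht, hr, rfl⟩
      refine ⟨⟨r, s, t, hr, by omega, ht, rfl⟩, ?_⟩
      simp; omega
  refine ⟨hmem, ?_⟩
  have himg : ScatFact k (List.replicate (k - i) wa ++ List.replicate k wb ++
      List.replicate i wa) =
      (Finset.range (i + 1) ×ˢ Finset.range (k - i + 1)).image
        (fun p : ℕ × ℕ => List.replicate p.2 wa ++ List.replicate (k - p.2 - p.1) wb ++
          List.replicate p.1 wa) := by
    ext u
    rw [hmem u, Finset.mem_image]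
    constructor
    · rintro ⟨r, s, t, hsum, ht, hr, rfl⟩
      refine ⟨(t, r), ?_, ?_⟩
      · simp [Finset.mem_product]; omega
      · have hs' : k - r - t = s := by omega
        simp only [hs']
    · rintro ⟨⟨t, r⟩, hp, rfl⟩
      simp [Finset.mem_product] at hp
      exact ⟨r, k - r - t, t, by omega, by omega, by omega, rfl⟩
  rw [himg, Finset.card_image_of_injOn, Finset.card_product, Finset.card_range,
    Finset.card_range]
  rintro ⟨t, r⟩ hp ⟨t', r'⟩ hp' heq
  simp [Finset.mem_product] at hp hp'
  simp only at heq
  have hrt : r + t ≤ k := by omega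
  have hrt' : r' + t' ≤ k := by omega
  by_cases hs : 0 < k - r - t
  · have := rep_inj (r := r) (s := k - r - t) (t := t) (r' := r') (s' := k - r' - t')
      (t' := t') (by simpa [wa, wb] using heq) hs
    simp only [Prod.mk.injEq]
    omega
  · -- k - r - t = 0, so r + t = k, forcing r = k - i, t = i
    have hs0 : k - r - t = 0 := by omega
    have hcnt := congrArg (List.count true) heq
    simp only [wa, wb] at hcnt
    rw [count_true_rep, count_true_rep] at hcnt
    simp only [Prod.mk.injEq]
    omega
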